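/- Let X be a Banach space such that for every T ∈ L(X), the identity I factors through T or through I − T (i.e., T ∉ M_X or I − T ∉ M_X, where M_X = {T : I does not factor through T}). Then M_X is closed under addition, hence is the largest proper two-sided ideal of L(X). -/
import Mathlib


/-- `M_X`: the set of operators through which the identity does not factor. -/
def MX (X : Type*) [NormedAddCommGroup X] [NormedSpace ℂ X] : Set (X →L[ℂ] X) :=
  {T : X →L[ℂ] X | ¬ ∃ U V : X →L[ℂ] X, V * T * U = 1}

lemma MX_add (X : Type*) [NormedAddCommGroup X] [NormedSpace ℂ X]
    (h : ∀ T : X →L[ℂ] X, T ∉ MX X ∨ (1 - T) ∉ MX X) :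
    ∀ S T : X →L[ℂ] X, S ∈ MX X → T ∈ MX X → S + T ∈ MX X := by
  intro S T hS hT hST
  obtain ⟨U, V, hUV⟩ := hST
  have key : ∀ A : X →L[ℂ] X, A ∈ MX X → V * A * U ∈ MX X := by
    intro A hA ⟨U', V', hUV'⟩
    exact hA ⟨U * U', V' * V, by rw [← hUV']; noncomm_ring⟩
  rcases h (V * S * U) with h1 | h1
  · exact h1 (key S hS)
  · refine h1 ?_
    have : (1 : X →L[ℂ] X) - V * S * U = V * T * U := by
      rw [← hUV]; noncomm_ring
    rw [this]
    exact key T hT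

/-- If for every `T ∈ L(X)` either `T ∉ M_X` or `I − T ∉ M_X`, then `M_X` is closed under
addition and is the largest proper two-sided ideal of `L(X)`. -/
theorem MX_largest_ideal (X : Type*) [NormedAddCommGroup X] [NormedSpace ℂ X]
    [CompleteSpace X] [Nontrivial X]
    (h : ∀ T : X →L[ℂ] X, T ∉ MX X ∨ (1 - T) ∉ MX X) :
    (∀ S T : X →L[ℂ] X, S ∈ MX X → T ∈ MX X → S + T ∈ MX X) ∧
    ∃ J : TwoSidedIdeal (X →L[ℂ] X), (J : Set (X →L[ℂ] X)) = MX X ∧ J ≠ ⊤ ∧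
      ∀ J' : TwoSidedIdeal (X →L[ℂ] X), J' ≠ ⊤ → (J' : Set (X →L[ℂ] X)) ⊆ MX X := by
  refine ⟨MX_add X h, ?_⟩
  have zero_mem : (0 : X →L[ℂ] X) ∈ MX X := by
    rintro ⟨U, V, hUV⟩
    simp only [mul_zero, zero_mul] at hUV
    exact zero_ne_one hUV
  have neg_mem : ∀ {T : X →L[ℂ] X}, T ∈ MX X → -T ∈ MX X := by
    rintro T hT ⟨U, V, hUV⟩
    exact hT ⟨U, -V, by rw [← hUV]; noncomm_ring⟩
  have mul_left : ∀ {A T : X →L[ℂ] X}, T ∈ MX X → A * T ∈ MX X := by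
    rintro A T hT ⟨U, V, hUV⟩
    exact hT ⟨U, V * A, by rw [← hUV]; noncomm_ring⟩
  have mul_right : ∀ {T A : X →L[ℂ] X}, T ∈ MX X → T * A ∈ MX X := by
    rintro T A hT ⟨U, V, hUV⟩
    exact hT ⟨A * U, V, by rw [← hUV]; noncomm_ring⟩
  refine ⟨TwoSidedIdeal.mk' (MX X) zero_mem (MX_add X h _ _) neg_mem mul_left mul_right,
    TwoSidedIdeal.coe_mk' _ _ _ _ _ _, ?_, ?_⟩
  · intro htop
    have h1 : (1 : X →L[ℂ] X) ∈ MX X := by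
      have := TwoSidedIdeal.one_mem_iff
        (TwoSidedIdeal.mk' (MX X) zero_mem (MX_add X h _ _) neg_mem mul_left mul_right)
      rw [TwoSidedIdeal.mem_mk'] at this
      exact this.2 htop
    exact h1 ⟨1, 1, by simp⟩
  · intro J' hJ' T hTJ'
    by_contra hT
    simp only [MX, Set.mem_setOf_eq, not_not] at hT
    obtain ⟨U, V, hUV⟩ := hT
    refine hJ' (TwoSidedIdeal.eq_top J' ?_)
    rw [← hUV]
    exact J'.mul_mem_right _ _ (J'.mul_mem_left _ _ hTJ')
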